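/- Let K be a complex Hilbert space and let A, B be nonzero bounded linear operators on K such that |A + B| = |A| + |B|, where |T| denotes the positive square root of T*∘T. Suppose D is a Moore–Penrose inverse of A + B. Then A and B are parallel summable, i.e., A∘D∘(A+B) = A and (A+B)∘D∘B = B, and the norm bound ‖A∘D∘B‖ ≤ (‖A‖·‖B‖)/(‖A‖ + ‖B‖) holds, where ‖·‖ is the operator norm. -/

import Mathlib

open ContinuousLinearMap NormedSpace
set_option linter.unusedSectionVars false
set_option maxHeartbeats 1000000

variable {H : Type*} [NormedAddCommGroup H] [InnerProductSpace ℂ H] [CompleteSpace H]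

local notation "⟪" x ", " y "⟫" => @inner ℂ _ _ x y

private lemma inner_star_left (M : H →L[ℂ] H) (u w : H) : ⟪(star M) u, w⟫ = ⟪u, M w⟫ := by
  rw [star_eq_adjoint]; exact adjoint_inner_left M w u

private lemma inner_star_right (M : H →L[ℂ] H) (u w : H) : ⟪u, (star M) w⟫ = ⟪M u, w⟫ := by
  rw [star_eq_adjoint]; exact adjoint_inner_right M u w

private lemma inner_sa_move (M : H →L[ℂ] H) (hM : star M = M) (u w : H) :
    ⟪M u, w⟫ = ⟪u, M w⟫ := by
  conv_lhs => rw [← hM]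
  exact inner_star_left M u w

private lemma re_symm (u w : H) : (⟪u, w⟫).re = (⟪w, u⟫).re := by
  simpa using inner_re_symm (𝕜 := ℂ) u w

private lemma re_self_eq_norm_sq (u : H) : (⟪u, u⟫).re = ‖u‖ ^ 2 := by
  simpa using inner_self_eq_norm_sq (𝕜 := ℂ) u

private lemma re_le_norm (u w : H) : (⟪u, w⟫).re ≤ ‖u‖ * ‖w‖ := by
  simpa using re_inner_le_norm (𝕜 := ℂ) u w

private lemma norm_add_sq'' (x y : H) : ‖x + y‖ ^ 2 = ‖x‖ ^ 2 + 2 * (⟪x, y⟫).re + ‖y‖ ^ 2 := by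
  simpa using norm_add_sq (𝕜 := ℂ) x y

private lemma norm_sub_sq'' (x y : H) : ‖x - y‖ ^ 2 = ‖x‖ ^ 2 - 2 * (⟪x, y⟫).re + ‖y‖ ^ 2 := by
  simpa using norm_sub_sq (𝕜 := ℂ) x y

private lemma quad_expand (p : H →L[ℂ] H) (hp : star p = p) (x y : H) (t : ℝ) :
    (⟪p (x + (t : ℂ) • y), x + (t : ℂ) • y⟫).re
      = (⟪p y, y⟫).re * (t * t) + (2 * (⟪p x, y⟫).re) * t + (⟪p x, x⟫).re := by
  have hyx : (⟪p y, x⟫).re = (⟪p x, y⟫).re := by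
    rw [inner_sa_move p hp y x, re_symm]
  have : ⟪p (x + (t : ℂ) • y), x + (t : ℂ) • y⟫
      = ⟪p x, x⟫ + (t:ℂ) * ⟪p x, y⟫ + (t:ℂ) * ⟪p y, x⟫ + ((t:ℂ) * (t:ℂ)) * ⟪p y, y⟫ := by
    rw [map_add, map_smul, inner_add_left, inner_add_right, inner_add_right,
      inner_smul_left, inner_smul_right, inner_smul_left, inner_smul_right,
      Complex.conj_ofReal]
    ring
  rw [this]
  simp [Complex.add_re, Complex.re_ofReal_mul, hyx]
  ring

private lemma posCS2 (p : H →L[ℂ] H) (hp : star p = p)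
    (hpos : ∀ z, 0 ≤ (⟪p z, z⟫).re) (x y : H) :
    ((⟪p x, y⟫).re) ^ 2 ≤ (⟪p x, x⟫).re * (⟪p y, y⟫).re := by
  have key : ∀ t : ℝ, 0 ≤ (⟪p y, y⟫).re * (t * t) + (2 * (⟪p x, y⟫).re) * t + (⟪p x, x⟫).re :=
    fun t => by rw [← quad_expand p hp x y t]; exact hpos _
  have hd := discrim_le_zero key
  rw [discrim] at hd
  nlinarith [hd]

private lemma posZero (p : H →L[ℂ] H) (hp : star p = p)
    (hpos : ∀ z, 0 ≤ (⟪p z, z⟫).re) (x : H) (hx : (⟪p x, x⟫).re = 0) : p x = 0 := by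
  have h := posCS2 p hp hpos x (p x)
  rw [hx, zero_mul] at h
  have h2 : (⟪p x, p x⟫).re = 0 := by
    have := re_self_eq_norm_sq (p x)
    nlinarith [sq_nonneg (‖p x‖), this, h]
  rw [re_self_eq_norm_sq] at h2
  have : ‖p x‖ = 0 := by nlinarith [norm_nonneg (p x)]
  simpa using this

private lemma norm_app_eq (p M : H →L[ℂ] H) (hp : star p = p)
    (hpM : p * p = star M * M) : ∀ v, ‖M v‖ = ‖p v‖ := by
  intro v
  have h : (⟪M v, M v⟫).re = (⟪p v, p v⟫).re := by
    have h1 : ⟪M v, M v⟫ = ⟪v, (star M * M) v⟫ := by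
      rw [ContinuousLinearMap.mul_apply, inner_star_right]
    have h2 : ⟪p v, p v⟫ = ⟪v, (p * p) v⟫ := by
      rw [ContinuousLinearMap.mul_apply]; exact inner_sa_move p hp v (p v)
    rw [h1, h2, hpM]
  rw [re_self_eq_norm_sq, re_self_eq_norm_sq] at h
  nlinarith [norm_nonneg (M v), norm_nonneg (p v)]

private lemma flow_hasDerivAt (Y : H →L[ℂ] H) (x₀ : H) (t : ℝ) :
    HasDerivAt (fun s : ℝ => exp (s • Y) x₀) (Y (exp (t • Y) x₀)) t := by
  have h := hasDerivAt_exp_smul_const' (𝕂 := ℝ) Y t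
  have h2 := (((ContinuousLinearMap.apply ℂ H x₀).restrictScalars ℝ).hasFDerivAt).comp_hasDerivAt t h
  simpa [ContinuousLinearMap.apply, Function.comp_def] using h2

private lemma inner_flow_deriv (p : H →L[ℂ] H) (f g : ℝ → H) (f' g' : H) (t : ℝ)
    (hf : HasDerivAt f f' t) (hg : HasDerivAt g g' t) :
    HasDerivAt (fun s => (⟪p (f s), g s⟫).re) ((⟪p (f t), g'⟫ + ⟪p f', g t⟫).re) t := by
  have hpf : HasDerivAt (fun s => p (f s)) (p f') t :=
    ((p.restrictScalars ℝ).hasFDerivAt).comp_hasDerivAt t hf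
  have hinner := HasDerivAt.inner (𝕜 := ℂ) hpf hg
  have := (Complex.reCLM.hasFDerivAt).comp_hasDerivAt t hinner
  simpa [Function.comp_def] using this

/-- `X` is a Moore–Penrose inverse of `T`. -/
def IsMPInv (T X : H →L[ℂ] H) : Prop :=
  T ∘L X ∘L T = T ∧ X ∘L T ∘L X = X ∧
    adjoint (T ∘L X) = T ∘L X ∧ adjoint (X ∘L T) = X ∘L T

/-- If `|A + B| = |A| + |B|` and `A + B` is M-P invertible, then `A` and `B` are parallel
summable and the norm bound `‖A : B‖ ≤ ‖A‖ ‖B‖ / (‖A‖ + ‖B‖)` holds. -/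
theorem parallel_summable_of_abs_add (A B sA sB sAB D : H →L[ℂ] H)
    (hA0 : A ≠ 0) (hB0 : B ≠ 0)
    (hsA : sA.IsPositive) (hsA2 : sA ∘L sA = adjoint A ∘L A)
    (hsB : sB.IsPositive) (hsB2 : sB ∘L sB = adjoint B ∘L B)
    (hsAB : sAB.IsPositive) (hsAB2 : sAB ∘L sAB = adjoint (A + B) ∘L (A + B))
    (habs : sAB = sA + sB) (hD : IsMPInv (A + B) D) :
    A ∘L D ∘L (A + B) = A ∧ (A + B) ∘L D ∘L B = B ∧
      ‖A ∘L D ∘L B‖ ≤ ‖A‖ * ‖B‖ / (‖A‖ + ‖B‖) := by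
  set T : H →L[ℂ] H := A + B with hTdef
  -- self-adjointness and positivity as plain facts
  have hsAs : star sA = sA := hsA.isSelfAdjoint.star_eq
  have hsBs : star sB = sB := hsB.isSelfAdjoint.star_eq
  have hsABs : star sAB = sAB := hsAB.isSelfAdjoint.star_eq
  have hposA : ∀ z, 0 ≤ (⟪sA z, z⟫).re := fun z => by
    simpa [reApplyInnerSelf_apply] using hsA.2 z
  have hposB : ∀ z, 0 ≤ (⟪sB z, z⟫).re := fun z => by
    simpa [reApplyInnerSelf_apply] using hsB.2 z
  have hposAB : ∀ z, 0 ≤ (⟪sAB z, z⟫).re := fun z => by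
    simpa [reApplyInnerSelf_apply] using hsAB.2 z
  have hsA2' : sA * sA = star A * A := by rw [star_eq_adjoint]; exact hsA2
  have hsB2' : sB * sB = star B * B := by rw [star_eq_adjoint]; exact hsB2
  have hsAB2' : sAB * sAB = star T * T := by rw [star_eq_adjoint]; exact hsAB2
  have hnA : ∀ v, ‖A v‖ = ‖sA v‖ := norm_app_eq sA A hsAs hsA2'
  have hnB : ∀ v, ‖B v‖ = ‖sB v‖ := norm_app_eq sB B hsBs hsB2'
  have hnT : ∀ v, ‖T v‖ = ‖sAB v‖ := norm_app_eq sAB T hsABs hsAB2'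
  have hTx : ∀ x, T x = A x + B x := fun x => rfl
  have hsABx : ∀ x, sAB x = sA x + sB x := fun x => by rw [habs]; rfl
  -- MP inverse facts
  have h1 : ∀ x, T (D (T x)) = T x := fun x => DFunLike.congr_fun hD.1 x
  have h2 : ∀ x, D (T (D x)) = D x := fun x => DFunLike.congr_fun hD.2.1 x
  have hQs : star (T * D) = T * D := by rw [star_eq_adjoint]; exact hD.2.2.1
  have hPs : star (D * T) = D * T := by rw [star_eq_adjoint]; exact hD.2.2.2
  -- kernel of T is contained in kernels of sA, sB, A, B
  have hker : ∀ u, T u = 0 → sA u = 0 ∧ sB u = 0 := by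
    intro u hu
    have h0 : sAB u = 0 := by
      have : ‖sAB u‖ = 0 := by rw [← hnT u, hu, norm_zero]
      simpa using this
    have hre : (⟪sA u, u⟫).re + (⟪sB u, u⟫).re = 0 := by
      have e : ⟪sA u, u⟫ + ⟪sB u, u⟫ = ⟪sAB u, u⟫ := by
        rw [hsABx, inner_add_left]
      have : (⟪sA u, u⟫ + ⟪sB u, u⟫).re = 0 := by rw [e, h0]; simp
      simpa [Complex.add_re] using this
    have hA' : (⟪sA u, u⟫).re = 0 := le_antisymm (by linarith [hposB u]) (hposA u)
    have hB' : (⟪sB u, u⟫).re = 0 := by linarith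
    exact ⟨posZero sA hsAs hposA u hA', posZero sB hsBs hposB u hB'⟩
  have hkerA : ∀ u, T u = 0 → A u = 0 := by
    intro u hu
    have : ‖A u‖ = 0 := by rw [hnA u, (hker u hu).1, norm_zero]
    simpa using this
  -- sA, sB, sAB absorb P = D T on the right
  have hsAP : ∀ x, sA (D (T x)) = sA x := by
    intro x
    have hu : T (D (T x) - x) = 0 := by rw [map_sub, h1 x, sub_self]
    have := (hker _ hu).1
    rw [map_sub, sub_eq_zero] at this
    exact this
  have hsBP : ∀ x, sB (D (T x)) = sB x := by
    intro x
    have hu : T (D (T x) - x) = 0 := by rw [map_sub, h1 x, sub_self]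
    have := (hker _ hu).2
    rw [map_sub, sub_eq_zero] at this
    exact this
  have hsABP : ∀ x, sAB (D (T x)) = sAB x := fun x => by
    rw [hsABx, hsABx, hsAP, hsBP]
  -- transposed versions
  have hPsA : ∀ x, D (T (sA x)) = sA x := by
    have hop : sA * (D * T) = sA := ContinuousLinearMap.ext fun x => hsAP x
    have := congrArg star hop
    rw [star_mul, hsAs, hPs] at this
    exact fun x => DFunLike.congr_fun this x
  have hPsB : ∀ x, D (T (sB x)) = sB x := by
    have hop : sB * (D * T) = sB := ContinuousLinearMap.ext fun x => hsBP x
    have := congrArg star hop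
    rw [star_mul, hsBs, hPs] at this
    exact fun x => DFunLike.congr_fun this x
  have hPsAB : ∀ x, D (T (sAB x)) = sAB x := by
    have hop : sAB * (D * T) = sAB := ContinuousLinearMap.ext fun x => hsABP x
    have := congrArg star hop
    rw [star_mul, hsABs, hPs] at this
    exact fun x => DFunLike.congr_fun this x
  -- star computations with D and T
  have hsTT : ∀ x, sAB (sAB x) = star T (T x) := fun x => DFunLike.congr_fun hsAB2' x
  have dstar1 : ∀ z, star D (star T z) = T (D z) := by
    have : star D * star T = T * D := by rw [← star_mul, hQs]
    exact fun z => DFunLike.congr_fun this z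
  have dstar2 : ∀ z, star T (star D z) = D (T z) := by
    have : star T * star D = D * T := by rw [← star_mul, hPs]
    exact fun z => DFunLike.congr_fun this z
  have hQTop : (T * D) * T = T := ContinuousLinearMap.ext fun x => h1 x
  have hsTQ : ∀ z, star T (T (D z)) = star T z := by
    have : star T * (T * D) = star T := by
      conv_lhs => rw [← hQs, ← star_mul, hQTop]
    exact fun z => DFunLike.congr_fun this z
  -- G = D D*  facts (written pointwise)
  have hPG : ∀ x, D (T (D (star D x))) = D (star D x) := fun x => h2 (star D x)
  have hGss : ∀ x, D (star D (sAB (sAB x))) = D (T x) := by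
    intro x
    rw [hsTT, dstar1, h2]
  have hssG : ∀ x, sAB (sAB (D (star D x))) = D (T x) := by
    intro x
    rw [hsTT]
    show star T (T (D (star D x))) = D (T x)
    rw [hsTQ, dstar2]
  have hGP : ∀ x, D (star D (D (T x))) = D (star D x) := by
    have hop : (D * T) * (D * star D) = D * star D := ContinuousLinearMap.ext fun x => hPG x
    have := congrArg star hop
    rw [star_mul, hPs] at this
    rw [show star (D * star D) = D * star D by rw [star_mul, star_star]] at this
    exact fun x => DFunLike.congr_fun this x
  -- commutation of G and sAB
  have hcomm : ∀ x, sAB (D (star D x)) = D (star D (sAB x)) := by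
    intro x
    calc sAB (D (star D x)) = D (T (sAB (D (star D x)))) := (hPsAB _).symm
      _ = D (star D (sAB (sAB (sAB (D (star D x)))))) := (hGss _).symm
      _ = D (star D (sAB (D (T x)))) := by rw [hssG]
      _ = D (star D (sAB x)) := by rw [hsABP]
  -- the operators g₁, W, W', Y
  set G : H →L[ℂ] H := D * star D with hGdef
  set g₁ : H →L[ℂ] H := G * sAB with hg₁def
  set W : H →L[ℂ] H := T * g₁ with hWdef
  set W' : H →L[ℂ] H := g₁ * star T with hW'def
  set Y : H →L[ℂ] H := W' * A - sA with hYdef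
  have hGs : star G = G := by
    show star (D * star D) = D * star D; rw [star_mul, star_star]
  have hg₁s : star g₁ = g₁ := by
    have h' : star g₁ = sAB * G := by
      show star (G * sAB) = sAB * G; rw [star_mul, hGs, hsABs]
    rw [h']
    exact ContinuousLinearMap.ext fun x => hcomm x
  have hg₁app : ∀ x, g₁ x = D (star D (sAB x)) := fun x => rfl
  have hg₁sAB : ∀ x, g₁ (sAB x) = D (T x) := fun x => hGss x
  have hsABg₁ : ∀ x, sAB (g₁ x) = D (T x) := fun x => by
    rw [hg₁app, ← hcomm, hssG]
  have hPg₁ : ∀ x, D (T (g₁ x)) = g₁ x := fun x => hPG (sAB x)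
  have hg₁g₁ : ∀ x, g₁ (g₁ x) = D (star D x) := by
    intro x
    rw [hg₁app x, ← hcomm x, hg₁sAB, h2]
  have hstarW' : star W' = W := by
    show star (g₁ * star T) = T * g₁; rw [star_mul, star_star, hg₁s]
  have hstarW : star W = W' := by rw [← hstarW', star_star]
  have hYapp : ∀ v, Y v = W' (A v) - sA v := fun v => rfl
  have hW'A : ∀ v, sA v + Y v = W' (A v) := fun v => by rw [hYapp]; abel
  have hPsT : ∀ z, D (T (star T z)) = star T z := by
    have hTPop : T * (D * T) = T := ContinuousLinearMap.ext fun x => h1 x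
    have := congrArg star hTPop
    rw [star_mul, hPs] at this
    exact fun z => DFunLike.congr_fun this z
  have hW'T : ∀ x, W' (T x) = sAB x := by
    intro x
    show g₁ (star T (T x)) = sAB x
    rw [← hsTT, hg₁sAB, hPsAB]
  have hWW' : ∀ z, W (W' z) = T (D z) := by
    intro z
    show T (g₁ (g₁ (star T z))) = T (D z)
    rw [hg₁g₁, dstar1, h2]
  -- contraction properties
  have hQsq : ∀ z, (⟪z, T (D z)⟫).re = ‖T (D z)‖ ^ 2 := by
    intro z
    have e1 : ⟪T (D z), T (D z)⟫ = ⟪z, T (D (T (D z)))⟫ :=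
      inner_sa_move (T * D) hQs z (T (D z))
    have e2 : T (D (T (D z))) = T (D z) := congrArg T (h2 z)
    rw [e2] at e1
    rw [← re_self_eq_norm_sq, e1]
  have hPsq : ∀ z, (⟪z, D (T z)⟫).re = ‖D (T z)‖ ^ 2 := by
    intro z
    have e1 : ⟪D (T z), D (T z)⟫ = ⟪z, D (T (D (T z)))⟫ :=
      inner_sa_move (D * T) hPs z (D (T z))
    have e2 : D (T (D (T z))) = D (T z) := h2 (T z)
    rw [e2] at e1
    rw [← re_self_eq_norm_sq, e1]
  have hQcontr : ∀ z, ‖T (D z)‖ ≤ ‖z‖ := by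
    intro z
    have h := hQsq z
    have h2' : (⟪z, T (D z)⟫).re ≤ ‖z‖ * ‖T (D z)‖ := re_le_norm _ _
    nlinarith [norm_nonneg (T (D z)), norm_nonneg z]
  have hPcontr : ∀ z, ‖D (T z)‖ ≤ ‖z‖ := by
    intro z
    have h := hPsq z
    have h2' : (⟪z, D (T z)⟫).re ≤ ‖z‖ * ‖D (T z)‖ := re_le_norm _ _
    nlinarith [norm_nonneg (D (T z)), norm_nonneg z]
  have hW'sq : ∀ z, ‖W' z‖ ^ 2 = ‖T (D z)‖ ^ 2 := by
    intro z
    have e1 : ⟪W' z, W' z⟫ = ⟪z, W (W' z)⟫ := by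
      rw [← hstarW]
      exact inner_star_left W z ((star W) z)
    rw [hWW'] at e1
    rw [← re_self_eq_norm_sq, e1, hQsq]
  have hW'contr : ∀ z, ‖W' z‖ ≤ ‖z‖ := by
    intro z
    have h := hW'sq z
    have h' : ‖W' z‖ = ‖T (D z)‖ := by
      nlinarith [norm_nonneg (W' z), norm_nonneg (T (D z))]
    rw [h']; exact hQcontr z
  -- the key scalar identity
  have hcross : ∀ v, (⟪A v, B v⟫).re = (⟪sA v, sB v⟫).re := by
    intro v
    have e0 : ‖A v + B v‖ = ‖sA v + sB v‖ := by
      have := hnT v; rwa [hTx, hsABx] at this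
    have e1 : ‖A v + B v‖ ^ 2 = ‖sA v + sB v‖ ^ 2 := by rw [e0]
    rw [norm_add_sq'', norm_add_sq'', hnA v, hnB v] at e1
    linarith
  have hkey : ∀ v, (⟪A v, T v⟫).re = (⟪sA v, sA v⟫).re + (⟪sA v, sB v⟫).re := by
    intro v
    rw [hTx, inner_add_right]
    have e1 : (⟪A v, A v⟫).re = (⟪sA v, sA v⟫).re := by
      rw [re_self_eq_norm_sq, re_self_eq_norm_sq, hnA]
    rw [Complex.add_re, e1, hcross]
  -- skewness of sAB Y, and the contraction inequality
  have hskew : ∀ v, (⟪Y v, sAB v⟫).re = 0 := by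
    intro v
    rw [hYapp, inner_sub_left]
    have e1 : ⟪W' (A v), sAB v⟫ = ⟪A v, T v⟫ := by
      conv_lhs => rw [show W' (A v) = star W (A v) by rw [hstarW]]
      rw [inner_star_left]
      congr 1
      show T (g₁ (sAB v)) = T v
      rw [hg₁sAB, h1]
    have e2 : (⟪sA v, sAB v⟫).re = (⟪sA v, sA v⟫).re + (⟪sA v, sB v⟫).re := by
      rw [hsABx, inner_add_right, Complex.add_re]
    rw [Complex.sub_re, e1, hkey, e2]
    ring
  have hcontrIneq : ∀ v, 2 * (⟪Y v, sA v⟫).re ≤ -‖Y v‖ ^ 2 := by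
    intro v
    have e : ‖sA v + Y v‖ ≤ ‖sA v‖ := by
      rw [hW'A v, ← hnA v]; exact hW'contr (A v)
    have e2 : ‖sA v + Y v‖ ^ 2 ≤ ‖sA v‖ ^ 2 :=
      pow_le_pow_left₀ (norm_nonneg _) e 2
    rw [norm_add_sq''] at e2
    have e3 : (⟪sA v, Y v⟫).re = (⟪Y v, sA v⟫).re := re_symm _ _
    nlinarith [sq_nonneg (‖Y v‖)]
  have hstepB : ∀ v, ‖Y v‖ ^ 2 ≤ 2 * (⟪Y v, sB v⟫).re := by
    intro v
    have e1 : (⟪Y v, sA v⟫).re + (⟪Y v, sB v⟫).re = 0 := by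
      have := hskew v
      rw [hsABx, inner_add_right, Complex.add_re] at this
      linarith
    have := hcontrIneq v
    nlinarith
  -- The norm of sAB is positive
  have hsABne : sAB ≠ 0 := by
    intro h
    apply hA0
    ext x
    have h0 : (⟪sA x, x⟫).re = 0 := by
      have e : ⟪sA x, x⟫ + ⟪sB x, x⟫ = 0 := by
        rw [← inner_add_left, ← hsABx, h]; simp
      have e' : (⟪sA x, x⟫).re + (⟪sB x, x⟫).re = 0 := by
        have := congrArg Complex.re e
        simpa [Complex.add_re] using this
      linarith [hposA x, hposB x]
    have := posZero sA hsAs hposA x h0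
    have hAx : ‖A x‖ = 0 := by rw [hnA x, this, norm_zero]
    simpa using hAx
  have hsABpos : 0 < ‖sAB‖ := by
    rcases (norm_nonneg sAB).lt_or_eq with h | h
    · exact h
    · exact absurd ((opNorm_zero_iff _).mp h.symm) hsABne
  -- The flow argument: Y = 0
  have hY0 : Y = 0 := by
    ext x₀
    show Y x₀ = 0
    set v : ℝ → H := fun t => exp (t • Y) x₀ with hvdef
    have hv : ∀ t, HasDerivAt v (Y (v t)) t := fun t => flow_hasDerivAt Y x₀ t
    have hv0 : v 0 = x₀ := by
      rw [hvdef]; simp [NormedSpace.exp_zero]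
    have hw : ∀ t, HasDerivAt (fun s => Y (v s)) (Y (Y (v t))) t := fun t => by
      have := ((Y.restrictScalars ℝ).hasFDerivAt).comp_hasDerivAt t (hv t)
      simpa [Function.comp_def] using this
    -- conserved quantity θ
    have hθd : ∀ t, HasDerivAt (fun s => (⟪sAB (Y (v s)), Y (v s)⟫).re) 0 t := by
      intro t
      have h := inner_flow_deriv sAB (fun s => Y (v s)) (fun s => Y (v s))
        (Y (Y (v t))) (Y (Y (v t))) t (hw t) (hw t)
      convert h using 1
      have e1 : (⟪sAB (Y (v t)), Y (Y (v t))⟫).re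
          = (⟪Y (Y (v t)), sAB (Y (v t))⟫).re := re_symm _ _
      have e2 : (⟪sAB (Y (Y (v t))), Y (v t)⟫).re
          = (⟪Y (Y (v t)), sAB (Y (v t))⟫).re := by
        rw [inner_sa_move sAB hsABs]
      have e3 := hskew (Y (v t))
      rw [Complex.add_re, e1, e2]
      rw [show (⟪Y (Y (v t)), sAB (Y (v t))⟫).re = 0 from e3]
      norm_num
    have hθconst : ∀ t, (⟪sAB (Y (v t)), Y (v t)⟫).re = (⟪sAB (Y x₀), Y x₀⟫).re := by
      intro t
      have := is_const_of_deriv_eq_zero (f := fun s => (⟪sAB (Y (v s)), Y (v s)⟫).re)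
        (fun s => (hθd s).differentiableAt) (fun s => (hθd s).deriv) t 0
      rwa [hv0] at this
    -- conserved quantity along v itself
    have hgd : ∀ t, HasDerivAt (fun s => (⟪sAB (v s), v s⟫).re) 0 t := by
      intro t
      have h := inner_flow_deriv sAB v v (Y (v t)) (Y (v t)) t (hv t) (hv t)
      convert h using 1
      have e1 : (⟪sAB (v t), Y (v t)⟫).re = (⟪Y (v t), sAB (v t)⟫).re := re_symm _ _
      have e2 : (⟪sAB (Y (v t)), v t⟫).re = (⟪Y (v t), sAB (v t)⟫).re := by
        rw [inner_sa_move sAB hsABs]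
      have e3 := hskew (v t)
      rw [Complex.add_re, e1, e2]
      rw [show (⟪Y (v t), sAB (v t)⟫).re = 0 from e3]
      norm_num
    have hgconst : ∀ t, (⟪sAB (v t), v t⟫).re = (⟪sAB x₀, x₀⟫).re := by
      intro t
      have := is_const_of_deriv_eq_zero (f := fun s => (⟪sAB (v s), v s⟫).re)
        (fun s => (hgd s).differentiableAt) (fun s => (hgd s).deriv) t 0
      rwa [hv0] at this
    set m := (⟪sAB (Y x₀), Y x₀⟫).re with hmdef
    have hm0 : 0 ≤ m := hposAB _
    -- lower bound on ‖Y (v t)‖²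
    have hlow : ∀ t, m / ‖sAB‖ ≤ ‖Y (v t)‖ ^ 2 := by
      intro t
      have h1' : m ≤ ‖sAB‖ * ‖Y (v t)‖ ^ 2 := by
        rw [← hθconst t]
        calc (⟪sAB (Y (v t)), Y (v t)⟫).re ≤ ‖sAB (Y (v t))‖ * ‖Y (v t)‖ := re_le_norm _ _
          _ ≤ (‖sAB‖ * ‖Y (v t)‖) * ‖Y (v t)‖ :=
              mul_le_mul_of_nonneg_right (le_opNorm sAB _) (norm_nonneg _)
          _ = ‖sAB‖ * ‖Y (v t)‖ ^ 2 := by ring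
      rw [div_le_iff₀ hsABpos]
      linarith [h1']
    -- derivative of φB
    have hφBd : ∀ t, HasDerivAt (fun s => (⟪sB (v s), v s⟫).re)
        (2 * (⟪Y (v t), sB (v t)⟫).re) t := by
      intro t
      have h := inner_flow_deriv sB v v (Y (v t)) (Y (v t)) t (hv t) (hv t)
      convert h using 1
      have e1 : (⟪sB (v t), Y (v t)⟫).re = (⟪Y (v t), sB (v t)⟫).re := re_symm _ _
      have e2 : (⟪sB (Y (v t)), v t⟫).re = (⟪Y (v t), sB (v t)⟫).re := by
        rw [inner_sa_move sB hsBs]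
      rw [Complex.add_re, e1, e2]
      ring
    -- monotone comparison
    set μ := m / ‖sAB‖ with hμdef
    have hlin : ∀ t : ℝ, HasDerivAt (fun s : ℝ => μ * s) μ t := fun t => by
      simpa using (hasDerivAt_id t).const_mul μ
    have hF : ∀ t, HasDerivAt (fun s : ℝ => (⟪sB (v s), v s⟫).re - μ * s)
        (2 * (⟪Y (v t), sB (v t)⟫).re - μ) t := fun t => (hφBd t).sub (hlin t)
    have hmono : Monotone (fun t => (⟪sB (v t), v t⟫).re - μ * t) := by
      apply monotone_of_deriv_nonneg
      · intro t
        exact (hF t).differentiableAt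
      · intro t
        rw [(hF t).deriv]
        have := hstepB (v t)
        have := hlow t
        linarith
    have hφB_nonneg : ∀ t, 0 ≤ (⟪sB (v t), v t⟫).re := fun t => hposB _
    have hφB_bdd : ∀ t, (⟪sB (v t), v t⟫).re ≤ (⟪sAB x₀, x₀⟫).re := by
      intro t
      rw [← hgconst t]
      have e : (⟪sAB (v t), v t⟫).re = (⟪sA (v t), v t⟫).re + (⟪sB (v t), v t⟫).re := by
        rw [hsABx, inner_add_left, Complex.add_re]
      rw [e]
      linarith [hposA (v t)]
    have hμ_nonpos : μ ≤ 0 := by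
      by_contra hcon
      push_neg at hcon
      set K0 := (⟪sAB x₀, x₀⟫).re with hK0
      have hK0nn : 0 ≤ K0 := hposAB _
      have := hmono (le_of_lt (show (0:ℝ) < (K0 + 1) / μ from
        div_pos (by linarith) hcon))
      simp only at this
      have e0 : (⟪sB (v 0), v 0⟫).re - μ * 0 = (⟪sB (v 0), v 0⟫).re := by ring
      have hcalc : μ * ((K0 + 1) / μ) = K0 + 1 := by
        field_simp
      have h1'' := hφB_bdd ((K0 + 1) / μ)
      have h2'' := hφB_nonneg 0
      rw [e0] at this
      nlinarith [this]
    have hmz : m = 0 := by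
      have : 0 ≤ μ := div_nonneg hm0 (le_of_lt hsABpos)
      have hμ0 : μ = 0 := le_antisymm hμ_nonpos this
      rw [hμdef] at hμ0
      exact (div_eq_zero_iff.mp hμ0).resolve_right hsABpos.ne'
    have hzero : sAB (Y x₀) = 0 := posZero sAB hsABs hposAB _ hmz
    -- conclude Y x₀ = 0
    have hPY : ∀ u, D (T (Y u)) = Y u := by
      intro u
      rw [hYapp, map_sub, map_sub, hPsA]
      congr 1
      show D (T (g₁ (star T (A u)))) = W' (A u)
      rw [hPg₁]
      rfl
    calc Y x₀ = D (T (Y x₀)) := (hPY x₀).symm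
      _ = D (star D (sAB (sAB (Y x₀)))) := (hGss _).symm
      _ = 0 := by rw [hzero]; simp
  -- consequences of Y = 0
  have hW'Av : ∀ u, W' (A u) = sA u := by
    intro u
    have hy : Y u = 0 := by rw [hY0]; rfl
    rw [hYapp, sub_eq_zero] at hy
    exact hy
  have hQA : ∀ x, T (D (A x)) = A x := by
    intro x
    have hn1 : ‖T (D (A x))‖ ^ 2 = ‖A x‖ ^ 2 := by
      rw [← hW'sq (A x), hW'Av, ← hnA]
    have hsub : ‖A x - T (D (A x))‖ ^ 2 = 0 := by
      rw [norm_sub_sq'', hQsq (A x), hn1]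
      ring
    have : A x - T (D (A x)) = 0 := by
      have := pow_eq_zero_iff (n := 2) (by norm_num) |>.mp hsub
      simpa using this
    rw [sub_eq_zero] at this
    exact this.symm
  -- Goal 1
  have goal1 : A ∘L D ∘L T = A := by
    ext x
    show A (D (T x)) = A x
    have hu : T (D (T x) - x) = 0 := by rw [map_sub, h1 x, sub_self]
    have := hkerA _ hu
    rw [map_sub, sub_eq_zero] at this
    exact this
  -- Goal 2
  have goal2 : T ∘L D ∘L B = B := by
    ext x
    show T (D (B x)) = B x
    have hBx : B x = T x - A x := by rw [hTx]; abel
    rw [hBx, map_sub, map_sub, h1, hQA]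
  refine ⟨goal1, goal2, ?_⟩
  -- Goal 3 : the norm inequality
  have hWA : ∀ u, W (sA u) = A u := by
    intro u
    rw [← hW'Av u, hWW', hQA]
  have hWsAB : ∀ u, W (sAB u) = T u := by
    intro u
    show T (g₁ (sAB u)) = T u
    rw [hg₁sAB, h1]
  have hWB : ∀ u, W (sB u) = B u := by
    intro u
    have e : sB u = sAB u - sA u := by rw [hsABx]; abel
    rw [e, map_sub, hWsAB, hWA, hTx]
    abel
  have hDW : ∀ u, D (W u) = g₁ u := fun u => hPg₁ u
  set N : H →L[ℂ] H := sA * (g₁ * sB) with hNdef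
  have hNapp : ∀ x, N x = sA (g₁ (sB x)) := fun x => rfl
  have hop : A ∘L D ∘L B = W ∘L N := by
    ext x
    show A (D (B x)) = W (N x)
    calc A (D (B x)) = A (D (W (sB x))) := by rw [hWB]
      _ = A (g₁ (sB x)) := by rw [hDW]
      _ = W (sA (g₁ (sB x))) := (hWA _).symm
      _ = W (N x) := rfl
  -- positivity of g₁
  have hg₁sABg₁ : ∀ x, g₁ (sAB (g₁ x)) = g₁ x := by
    intro x
    rw [hg₁sAB (g₁ x), hPg₁]
  have hg₁pos : ∀ x, 0 ≤ (⟪g₁ x, x⟫).re := by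
    intro x
    have e : (⟪g₁ x, x⟫).re = (⟪sAB (g₁ x), g₁ x⟫).re := by
      conv_lhs => rw [← hg₁sABg₁ x]
      rw [inner_sa_move g₁ hg₁s]
    rw [e]
    exact hposAB _
  -- alternative forms of N
  have hNA : ∀ x, N x = sA x - sA (g₁ (sA x)) := by
    intro x
    rw [hNapp]
    have e : sB x = sAB x - sA x := by rw [hsABx]; abel
    rw [e, map_sub, map_sub, hg₁sAB, hsAP]
  have hNB : ∀ x, N x = sB x - sB (g₁ (sB x)) := by
    intro x
    rw [hNapp]
    have e : ∀ z, sA z = sAB z - sB z := fun z => by rw [hsABx]; abel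
    rw [e (g₁ (sB x)), hsABg₁, hPsB]
  have hNC : ∀ x, N x = sB (g₁ (sA x)) := by
    intro x
    have e : ∀ z, sB z = sAB z - sA z := fun z => by rw [hsABx]; abel
    rw [e (g₁ (sA x)), hsABg₁, hPsA, ← hNA]
  have hNsa : star N = N := by
    have : star N = (sB * g₁) * sA := by
      show star (sA * (g₁ * sB)) = (sB * g₁) * sA
      rw [star_mul, star_mul, hsAs, hsBs, hg₁s]
    rw [this]
    exact ContinuousLinearMap.ext fun x => (hNC x).symm
  -- positivity of N
  have hNpos : ∀ x, 0 ≤ (⟪N x, x⟫).re := by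
    intro x
    set θ := (⟪g₁ (sA x), sA x⟫).re with hθdef
    have hθ0 : 0 ≤ θ := hg₁pos _
    have hNval : (⟪N x, x⟫).re = (⟪sA x, x⟫).re - θ := by
      rw [hNA, inner_sub_left, Complex.sub_re]
      congr 1
      rw [inner_sa_move sA hsAs]
    have hcs := posCS2 sA hsAs hposA (g₁ (sA x)) x
    have hlhs : (⟪sA (g₁ (sA x)), x⟫).re = θ := by
      rw [inner_sa_move sA hsAs]
    have hmid : (⟪sA (g₁ (sA x)), g₁ (sA x)⟫).re ≤ θ := by
      have e1 : (⟪sA (g₁ (sA x)), g₁ (sA x)⟫).re ≤ (⟪sAB (g₁ (sA x)), g₁ (sA x)⟫).re := by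
        have e2 : (⟪sAB (g₁ (sA x)), g₁ (sA x)⟫).re
            = (⟪sA (g₁ (sA x)), g₁ (sA x)⟫).re + (⟪sB (g₁ (sA x)), g₁ (sA x)⟫).re := by
          rw [hsABx, inner_add_left, Complex.add_re]
        linarith [hposB (g₁ (sA x))]
      have e3 : (⟪sAB (g₁ (sA x)), g₁ (sA x)⟫).re = θ := by
        have e4 : ⟪sAB (g₁ (sA x)), g₁ (sA x)⟫ = ⟪sA x, g₁ (sA x)⟫ := by
          rw [← inner_sa_move g₁ hg₁s, hg₁sABg₁, inner_sa_move g₁ hg₁s]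
        rw [e4, hθdef, re_symm]
      linarith
    rw [hlhs] at hcs
    have hθle : θ ≤ (⟪sA x, x⟫).re := by
      rcases eq_or_lt_of_le hθ0 with h | h
      · rw [← h]; exact hposA x
      · nlinarith [hcs, hmid, hposA x]
    rw [hNval]
    linarith
  have haA : 0 < ‖A‖ := by
    rcases (norm_nonneg A).lt_or_eq with h | h
    · exact h
    · exact absurd ((opNorm_zero_iff _).mp h.symm) hA0
  have hbB : 0 < ‖B‖ := by
    rcases (norm_nonneg B).lt_or_eq with h | h
    · exact h
    · exact absurd ((opNorm_zero_iff _).mp h.symm) hB0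
  -- variational inequality for N
  have hsplit : ∀ u v : H, (⟪N (u + v), u + v⟫).re ≤ (⟪sA u, u⟫).re + (⟪sB v, v⟫).re := by
    intro u v
    have rU : (⟪N u, u⟫).re = (⟪sA u, u⟫).re - (⟪g₁ (sA u), sA u⟫).re := by
      rw [hNA, inner_sub_left, Complex.sub_re]
      congr 1
      rw [inner_sa_move sA hsAs]
    have rV : (⟪N v, v⟫).re = (⟪sB v, v⟫).re - (⟪g₁ (sB v), sB v⟫).re := by
      rw [hNB, inner_sub_left, Complex.sub_re]
      congr 1
      rw [inner_sa_move sB hsBs]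
    have rUV : (⟪N u, v⟫).re = (⟪g₁ (sA u), sB v⟫).re := by
      rw [hNC, inner_sa_move sB hsBs]
    have rVU : (⟪N v, u⟫).re = (⟪N u, v⟫).re := by
      rw [hNC v, inner_sa_move sB hsBs, inner_sa_move g₁ hg₁s, inner_sa_move sA hsAs]
      rw [show sA (g₁ (sB u)) = N u from (hNapp u).symm, re_symm]
    have hexp : (⟪N (u + v), u + v⟫).re
        = (⟪N u, u⟫).re + (⟪N u, v⟫).re + (⟪N v, u⟫).re + (⟪N v, v⟫).re := by
      rw [map_add, inner_add_left, inner_add_right, inner_add_right]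
      simp only [Complex.add_re]
      ring
    have hposdiff : 0 ≤ (⟪g₁ (sA u - sB v), sA u - sB v⟫).re := hg₁pos _
    have hexpand : (⟪g₁ (sA u - sB v), sA u - sB v⟫).re
        = (⟪g₁ (sA u), sA u⟫).re - 2 * (⟪g₁ (sA u), sB v⟫).re
          + (⟪g₁ (sB v), sB v⟫).re := by
      have ecross : (⟪g₁ (sB v), sA u⟫).re = (⟪g₁ (sA u), sB v⟫).re := by
        rw [inner_sa_move g₁ hg₁s, re_symm]
      have e : ⟪g₁ (sA u) - g₁ (sB v), sA u - sB v⟫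
          = ⟪g₁ (sA u), sA u⟫ - ⟪g₁ (sA u), sB v⟫ - ⟪g₁ (sB v), sA u⟫
            + ⟪g₁ (sB v), sB v⟫ := by
        rw [inner_sub_left, inner_sub_right, inner_sub_right]
        ring
      rw [map_sub, e]
      simp only [Complex.add_re, Complex.sub_re]
      rw [ecross]
      ring
    rw [hexp, rU, rV, rUV, rVU]
    rw [hexpand] at hposdiff
    linarith
  have hA' : ∀ x, (⟪sA x, x⟫).re ≤ ‖A‖ * ‖x‖ ^ 2 := by
    intro x
    calc (⟪sA x, x⟫).re ≤ ‖sA x‖ * ‖x‖ := re_le_norm _ _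
      _ = ‖A x‖ * ‖x‖ := by rw [hnA]
      _ ≤ (‖A‖ * ‖x‖) * ‖x‖ := mul_le_mul_of_nonneg_right (le_opNorm A x) (norm_nonneg x)
      _ = ‖A‖ * ‖x‖ ^ 2 := by ring
  have hB' : ∀ x, (⟪sB x, x⟫).re ≤ ‖B‖ * ‖x‖ ^ 2 := by
    intro x
    calc (⟪sB x, x⟫).re ≤ ‖sB x‖ * ‖x‖ := re_le_norm _ _
      _ = ‖B x‖ * ‖x‖ := by rw [hnB]
      _ ≤ (‖B‖ * ‖x‖) * ‖x‖ := mul_le_mul_of_nonneg_right (le_opNorm B x) (norm_nonneg x)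
      _ = ‖B‖ * ‖x‖ ^ 2 := by ring
  have hupper : ∀ x, (⟪N x, x⟫).re ≤ (‖A‖ * ‖B‖ / (‖A‖ + ‖B‖)) * ‖x‖ ^ 2 := by
    intro x
    have hab : 0 < ‖A‖ + ‖B‖ := by linarith
    set β : ℝ := ‖B‖ / (‖A‖ + ‖B‖) with hβ
    set α : ℝ := ‖A‖ / (‖A‖ + ‖B‖) with hα
    have hβ0 : 0 ≤ β := by positivity
    have hα0 : 0 ≤ α := by positivity
    have hsum : ((β : ℂ)) + ((α : ℂ)) = 1 := by
      rw [hβ, hα]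
      push_cast
      rw [← add_div]
      rw [div_eq_one_iff_eq (by exact_mod_cast hab.ne')]
      ring
    have hx : ((β : ℂ)) • x + ((α : ℂ)) • x = x := by rw [← add_smul, hsum, one_smul]
    have h := hsplit ((β : ℂ) • x) ((α : ℂ) • x)
    rw [hx] at h
    have eA : (⟪sA ((β : ℂ) • x), (β : ℂ) • x⟫).re = β ^ 2 * (⟪sA x, x⟫).re := by
      rw [map_smul, inner_smul_left, inner_smul_right, Complex.conj_ofReal,
        ← mul_assoc, ← Complex.ofReal_mul, Complex.re_ofReal_mul]
      ring
    have eB : (⟪sB ((α : ℂ) • x), (α : ℂ) • x⟫).re = α ^ 2 * (⟪sB x, x⟫).re := by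
      rw [map_smul, inner_smul_left, inner_smul_right, Complex.conj_ofReal,
        ← mul_assoc, ← Complex.ofReal_mul, Complex.re_ofReal_mul]
      ring
    rw [eA, eB] at h
    have harith : β ^ 2 * ‖A‖ + α ^ 2 * ‖B‖ = ‖A‖ * ‖B‖ / (‖A‖ + ‖B‖) := by
      rw [hβ, hα]
      field_simp
      ring
    calc (⟪N x, x⟫).re ≤ β ^ 2 * (⟪sA x, x⟫).re + α ^ 2 * (⟪sB x, x⟫).re := h
      _ ≤ β ^ 2 * (‖A‖ * ‖x‖ ^ 2) + α ^ 2 * (‖B‖ * ‖x‖ ^ 2) := by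
          have := hA' x
          have := hB' x
          have h2β := mul_le_mul_of_nonneg_left (hA' x) (sq_nonneg β)
          have h2α := mul_le_mul_of_nonneg_left (hB' x) (sq_nonneg α)
          linarith
      _ = (β ^ 2 * ‖A‖ + α ^ 2 * ‖B‖) * ‖x‖ ^ 2 := by ring
      _ = (‖A‖ * ‖B‖ / (‖A‖ + ‖B‖)) * ‖x‖ ^ 2 := by rw [harith]
  have hc0 : 0 ≤ ‖A‖ * ‖B‖ / (‖A‖ + ‖B‖) := by positivity
  have hNx_le : ∀ x, ‖N x‖ ≤ (‖A‖ * ‖B‖ / (‖A‖ + ‖B‖)) * ‖x‖ := by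
    intro x
    by_cases hz : ‖N x‖ = 0
    · rw [hz]; positivity
    · have hcs := posCS2 N hNsa hNpos x (N x)
      rw [re_self_eq_norm_sq] at hcs
      have h1' := hupper x
      have h2' := hupper (N x)
      have hnz : 0 < ‖N x‖ := lt_of_le_of_ne (norm_nonneg _) (Ne.symm hz)
      have hp1 : (⟪N x, x⟫).re * (⟪N (N x), N x⟫).re
          ≤ ((‖A‖ * ‖B‖ / (‖A‖ + ‖B‖)) * ‖x‖ ^ 2) * ((‖A‖ * ‖B‖ / (‖A‖ + ‖B‖)) * ‖N x‖ ^ 2) :=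
        mul_le_mul h1' h2' (hNpos (N x)) (by positivity)
      have h5 : ‖N x‖ ^ 2 ≤ (‖A‖ * ‖B‖ / (‖A‖ + ‖B‖)) ^ 2 * ‖x‖ ^ 2 := by
        nlinarith [hcs, hp1, mul_pos hnz hnz, sq_nonneg (‖N x‖), norm_nonneg x]
      by_contra hgt
      push_neg at hgt
      have hcx : 0 ≤ ‖A‖ * ‖B‖ / (‖A‖ + ‖B‖) * ‖x‖ := mul_nonneg hc0 (norm_nonneg x)
      nlinarith [h5, hgt, hcx]
  have hW'W : ∀ z, W' (W z) = D (T z) := by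
    intro z
    show g₁ (star T (T (g₁ z))) = D (T z)
    rw [← hsTT, hg₁sAB, hPsAB, hsABg₁]
  have hWcontr : ∀ z, ‖W z‖ ≤ ‖z‖ := by
    intro z
    have e1 : ⟪W z, W z⟫ = ⟪z, W' (W z)⟫ := by
      rw [← hstarW']
      exact inner_star_left W' z _
    rw [hW'W] at e1
    have e2 : ‖W z‖ ^ 2 = ‖D (T z)‖ ^ 2 := by
      rw [← re_self_eq_norm_sq, e1, hPsq]
    have e3 : ‖W z‖ = ‖D (T z)‖ := by
      nlinarith [norm_nonneg (W z), norm_nonneg (D (T z))]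
    rw [e3]; exact hPcontr z
  rw [show A ∘L D ∘L B = W ∘L N from hop]
  apply opNorm_le_bound _ hc0
  intro x
  calc ‖(W ∘L N) x‖ = ‖W (N x)‖ := rfl
    _ ≤ ‖N x‖ := hWcontr _
    _ ≤ ‖A‖ * ‖B‖ / (‖A‖ + ‖B‖) * ‖x‖ := hNx_le x
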